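/- arXiv:2304.05145 — 2 statements merged into one kernel-verified Lean document; each statement's English description precedes it below -/
import Mathlib

section
/- Let n ≥ k ≥ 2 and let S be a nonempty family of k-element subsets of [n] whose support is [n] (every element of [n] belongs to some member of S). Let a be the k-binomial decomposition of |S|, and for each x ∈ [n] let c(x) be the (k−1)-binomial decomposition of |S(x)| and b(x) the k-binomial decomposition of |S| − |S(x)|. Suppose there exists x ∈ [n] with |S| − |S(x)| ≥ B(a−1, k) such that either (i) this inequality is strict, S(x)∖x ⊆ Δ(S∖S(x)), both S∖S(x) and S(x)∖x are extremal, and B(a, k−1) = B(b(x), k−1) + B(c(x), k−2); or (ii) |S| − |S(x)| = B(a−1, k), Δ(S∖S(x)) ⊆ S(x)∖x, and S(x)∖x is extremal. Then S is extremal. -/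
/-- Generalized binomial coefficient `C(n, j)`:
`C(n,j) = n(n-1)⋯(n-j+1)/j!` for `j ≥ 0` and `C(n,j) = 0` for `j < 0`. -/
def C (n j : ℤ) : ℤ :=
  if 0 ≤ j then
    if 0 ≤ n then ((n.toNat.choose j.toNat : ℕ) : ℤ)
    else (-1) ^ j.toNat * (((j - n - 1).toNat.choose j.toNat : ℕ) : ℤ)
  else 0

/-- `B a k = Σ_l C(a_l, k - l)`. -/
def B : List ℤ → ℤ → ℤ
  | [], _ => 0
  | x :: xs, k => C x k + B xs (k - 1)

/-- `a` has the shape of a `k`-binomial decomposition: strictly decreasing,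
length at most `k`, and `a_i ≥ k - i` for every index. -/
def IsKBinomSeq (k : ℕ) (a : List ℤ) : Prop :=
  a.Chain' (· > ·) ∧ a.length ≤ k ∧ ∀ i < a.length, (k : ℤ) - i ≤ a.getD i 0

/-- `a` is the `k`-binomial decomposition of `m`. -/
def IsKBinom (k : ℕ) (m : ℤ) (a : List ℤ) : Prop :=
  IsKBinomSeq k a ∧ m = B a (k : ℤ)

/-- Non-strict lexicographic order on integer sequences. -/
def lexLE (x y : List ℤ) : Prop := x = y ∨ List.Lex (· < ·) x y

/-- A family `T` of `j`-element sets is extremal if `|Δ(T)| = B(d, j-1)`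
where `d` is the `j`-binomial decomposition of `|T|`. -/
def IsExtremal {α : Type} [DecidableEq α] (j : ℕ) (T : Finset (Finset α)) : Prop :=
  ∃ d : List ℤ, IsKBinom j (T.card : ℤ) d ∧ ((Finset.shadow T).card : ℤ) = B d ((j : ℤ) - 1)


lemma C_neg {j : ℤ} (n : ℤ) (hj : j < 0) : C n j = 0 := by
  simp [C, not_le.mpr hj]

lemma C_nat {n j : ℤ} (hn : 0 ≤ n) (hj : 0 ≤ j) : C n j = (n.toNat.choose j.toNat : ℤ) := by
  simp [C, hj, hn]

lemma C_zero {n : ℤ} (hn : 0 ≤ n) : C n 0 = 1 := by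
  rw [C_nat hn le_rfl]; simp

lemma C_nonneg {n : ℤ} (j : ℤ) (hn : 0 ≤ n) : 0 ≤ C n j := by
  rcases lt_or_ge j 0 with h | h
  · simp [C_neg n h]
  · rw [C_nat hn h]; positivity

lemma C_pos {n j : ℤ} (hj : 0 ≤ j) (hjn : j ≤ n) : 0 < C n j := by
  rw [C_nat (hj.trans hjn) hj]
  exact_mod_cast Nat.choose_pos (by omega)

lemma C_succ {n : ℤ} (j : ℤ) (hn : 0 ≤ n) : C (n + 1) j = C n j + C n (j - 1) := by
  rcases lt_trichotomy j 0 with h | h | h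
  · rw [C_neg _ h, C_neg _ h, C_neg _ (by omega), add_zero]
  · subst h
    rw [C_zero (by omega), C_zero hn, C_neg _ (by norm_num)]
    ring
  · rw [C_nat (by omega) (by omega), C_nat hn (by omega), C_nat hn (by omega)]
    have h1 : (n + 1).toNat = n.toNat + 1 := by omega
    have h2 : j.toNat = (j - 1).toNat + 1 := by omega
    rw [h1, h2, Nat.choose_succ_succ]
    push_cast; ring

lemma C_mono {n m : ℤ} (j : ℤ) (hn : 0 ≤ n) (h : n ≤ m) : C n j ≤ C m j := by
  rcases lt_or_ge j 0 with hj | hj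
  · simp [C_neg _ hj]
  · rw [C_nat hn hj, C_nat (hn.trans h) hj]
    exact_mod_cast Nat.choose_le_choose _ (by omega)

lemma B_nil (j : ℤ) : B [] j = 0 := rfl
lemma B_cons (x : ℤ) (xs : List ℤ) (j : ℤ) : B (x :: xs) j = C x j + B xs (j - 1) := rfl

lemma B_nonneg (a : List ℤ) (h : ∀ x ∈ a, 0 ≤ x) : ∀ j : ℤ, 0 ≤ B a j := by
  induction a with
  | nil => intro j; simp [B_nil]
  | cons x t ih =>
    intro j
    rw [B_cons]
    have := C_nonneg j (h x (by simp))
    have := ih (fun y hy => h y (by simp [hy])) (j - 1)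
    omega

lemma B_pascal (a : List ℤ) (h : ∀ x ∈ a, 1 ≤ x) (j : ℤ) :
    B a j = B (a.map (· - 1)) j + B (a.map (· - 1)) (j - 1) := by
  induction a generalizing j with
  | nil => simp [B_nil]
  | cons x t ih =>
    have hx : 1 ≤ x := h x (by simp)
    have hC : C x j = C (x - 1) j + C (x - 1) (j - 1) := by
      have h5 := C_succ (n := x - 1) j (by omega)
      rwa [sub_add_cancel] at h5
    rw [List.map_cons, B_cons, B_cons, B_cons, hC,
      ih (fun y hy => h y (by simp [hy])) (j - 1)]
    ring

lemma seq_entry_lb {k : ℕ} {a : List ℤ} (h : IsKBinomSeq k a) :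
    ∀ x ∈ a, (k : ℤ) - (a.length - 1 : ℤ) ≤ x := by
  intro x hx
  obtain ⟨i, hi, rfl⟩ := List.mem_iff_getElem.mp hx
  have h3 := h.2.2 i hi
  rw [List.getD_eq_getElem?_getD, List.getElem?_eq_getElem hi] at h3
  simp at h3
  have : (i : ℤ) ≤ (a.length : ℤ) - 1 := by
    have : i < a.length := hi
    omega
  omega

lemma seq_one_le {k : ℕ} {a : List ℤ} (h : IsKBinomSeq k a) : ∀ x ∈ a, 1 ≤ x := by
  intro x hx
  have h1 := seq_entry_lb h x hx
  have h2 : a.length ≤ k := h.2.1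
  have h3 : 0 < a.length := List.length_pos_iff.mpr (by rintro rfl; simp at hx)
  have : ((a.length : ℤ)) ≤ (k : ℤ) := by exact_mod_cast h2
  omega

lemma seq_tail {k : ℕ} {x : ℤ} {t : List ℤ} (h : IsKBinomSeq k (x :: t)) :
    IsKBinomSeq (k - 1) t ∧ (k : ℤ) ≤ x ∧ 1 ≤ k := by
  have hk : 1 ≤ k := by
    have := h.2.1; simp at this; omega
  have hx : (k : ℤ) ≤ x := by
    have := h.2.2 0 (by simp)
    simpa using this
  refine ⟨⟨h.1.tail, ?_, ?_⟩, hx, hk⟩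
  · have := h.2.1; simp at this ⊢; omega
  · intro i hi
    have h4 := h.2.2 (i + 1) (by simp; omega)
    rw [List.getD_cons_succ] at h4
    have hcast : ((k - 1 : ℕ) : ℤ) = (k : ℤ) - 1 := by omega
    rw [hcast]
    push_cast at h4 ⊢
    omega

lemma B_lt (a : List ℤ) : ∀ (k : ℕ) (M : ℤ), IsKBinomSeq k a →
    (∀ y ∈ a.head?, y < M) → (k : ℤ) ≤ M → B a k < C M k := by
  induction a with
  | nil =>
    intro k M _ _ hM
    rw [B_nil]
    exact C_pos (by positivity) hM
  | cons x t ih =>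
    intro k M h hhead hM
    obtain ⟨ht, hx, hk⟩ := seq_tail h
    have hxM : x < M := hhead x (by simp)
    have hx0 : 0 ≤ x := by
      have : (0 : ℤ) ≤ (k : ℤ) := by positivity
      omega
    have hcast : ((k - 1 : ℕ) : ℤ) = (k : ℤ) - 1 := by omega
    have hth : ∀ y ∈ t.head?, y < x := by
      intro y hy
      exact (List.isChain_cons.mp h.1).1 y hy
    have h1 : B t ((k : ℤ) - 1) < C x ((k : ℤ) - 1) := by
      have h5 := ih (k - 1) x ht hth (by rw [hcast]; omega)
      rwa [hcast] at h5
    have h2 : C x k + C x ((k : ℤ) - 1) = C (x + 1) k := (C_succ k hx0).symm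
    have h3 : C (x + 1) k ≤ C M k := C_mono k (by omega) (by omega)
    rw [B_cons]
    linarith

lemma B_lt_head {k : ℕ} {x y : ℤ} {s t : List ℤ} (hxy : x < y)
    (ha : IsKBinomSeq k (x :: s)) (hb : IsKBinomSeq k (y :: t)) :
    B (x :: s) k < B (y :: t) k := by
  obtain ⟨htb, hy, hk⟩ := seq_tail hb
  have h1 : B (x :: s) k < C y k := B_lt _ k y ha (by simp; omega) hy
  have h2 : 0 ≤ B t ((k : ℤ) - 1) :=
    B_nonneg t (fun z hz => by have := seq_one_le hb z (by simp [hz]); omega) _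
  have h3 : B (y :: t) (k : ℤ) = C y (k : ℤ) + B t ((k : ℤ) - 1) := rfl
  linarith

lemma kbinom_unique : ∀ (a : List ℤ) {k : ℕ} (b : List ℤ), IsKBinomSeq k a →
    IsKBinomSeq k b → B a (k : ℤ) = B b (k : ℤ) → a = b := by
  intro a
  induction a with
  | nil =>
    intro k b _ hb heq
    cases b with
    | nil => rfl
    | cons y t =>
      exfalso
      obtain ⟨ht, hy, hk⟩ := seq_tail hb
      have h1 : 0 < C y k := C_pos (by positivity) hy
      have h2 : 0 ≤ B t ((k : ℤ) - 1) :=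
        B_nonneg t (fun z hz => by have := seq_one_le hb z (by simp [hz]); omega) _
      rw [B_nil, B_cons] at heq
      linarith
  | cons x s ih =>
    intro k b ha hb heq
    cases b with
    | nil =>
      exfalso
      obtain ⟨hs, hx, hk⟩ := seq_tail ha
      have h1 : 0 < C x k := C_pos (by positivity) hx
      have h2 : 0 ≤ B s ((k : ℤ) - 1) :=
        B_nonneg s (fun z hz => by have := seq_one_le ha z (by simp [hz]); omega) _
      rw [B_nil, B_cons] at heq
      linarith
    | cons y t =>
      rcases lt_trichotomy x y with h | h | h
      · have := B_lt_head h ha hb; linarith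
      · subst h
        obtain ⟨hs, hx, hk⟩ := seq_tail ha
        obtain ⟨ht, -, -⟩ := seq_tail hb
        have hcast : ((k - 1 : ℕ) : ℤ) = (k : ℤ) - 1 := by omega
        rw [B_cons, B_cons] at heq
        have heq2 : B s ((k - 1 : ℕ) : ℤ) = B t ((k - 1 : ℕ) : ℤ) := by
          rw [hcast]; linarith
        rw [ih t hs ht heq2]
      · have := B_lt_head h hb ha; linarith

lemma norm2 : ∀ (d : List ℤ) (q : ℕ), d.length = q + 1 → 1 ≤ q → d.Chain' (· > ·) →
    (∀ z ∈ d, 0 ≤ z) → ∃ c', IsKBinomSeq q c' ∧ (∀ j : ℤ, j ≤ (q : ℤ) → B c' j = B d j) ∧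
      (c' = [d.headD 0 + 1] ∨ c'.head? = d.head?) := by
  intro d
  induction d with
  | nil => intro q hlen; simp at hlen
  | cons x rest ih =>
    intro q hlen hq hchain hpos
    have hx0 : 0 ≤ x := hpos x (by simp)
    by_cases hq1 : q = 1
    · subst hq1
      have hr1 : rest.length = 1 := by simp at hlen; omega
      obtain ⟨y, rfl⟩ := List.length_eq_one_iff.mp hr1
      have hy0 : 0 ≤ y := hpos y (by simp)
      refine ⟨[x + 1], ⟨List.isChain_singleton _, by simp, ?_⟩, ?_, Or.inl (by simp)⟩
      · intro i hi
        simp at hi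
        subst hi
        simp [List.getD]
        omega
      · intro j hj
        rw [B_cons, B_cons, B_cons, B_nil, B_nil, C_succ j hx0]
        have hCeq : C x (j - 1) = C y (j - 1) := by
          rcases lt_trichotomy (j - 1) 0 with h | h | h
          · rw [C_neg _ h, C_neg _ h]
          · rw [h, C_zero hx0, C_zero hy0]
          · omega
        rw [hCeq]
        ring
    · have hq2 : 2 ≤ q := by omega
      have hrl : rest.length = (q - 1) + 1 := by simp at hlen; omega
      obtain ⟨c'', hseq'', hval'', hhead''⟩ :=
        ih (q - 1) hrl (by omega) hchain.tail (fun z hz => hpos z (by simp [hz]))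
      have hcast : ((q - 1 : ℕ) : ℤ) = (q : ℤ) - 1 := by omega
      obtain ⟨r0, rest', rfl⟩ : ∃ r0 rest', rest = r0 :: rest' := by
        cases rest with
        | nil => simp at hrl
        | cons a b => exact ⟨a, b, rfl⟩
      have hr0x : x > r0 := (List.isChain_cons_cons.mp hchain).1
      by_cases hm : c'' = [x]
      · refine ⟨[x + 1], ⟨List.isChain_singleton _, by simp; omega, ?_⟩, ?_, Or.inl (by simp)⟩
        · intro i hi
          simp at hi
          subst hi
          have h5 := hseq''.2.2 0 (by rw [hm]; simp)
          rw [hm] at h5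
          simp [List.getD] at h5 ⊢
          omega
        · intro j hj
          have h6 := hval'' (j - 1) (by omega)
          rw [hm] at h6
          rw [B_cons, B_cons, B_nil, C_succ j hx0, ← h6, B_cons, B_nil]
          ring
      · have hne : c'' ≠ [] := by
          rcases hhead'' with h | h
          · rw [h]; simp
          · intro hc; rw [hc] at h; simp at h
        obtain ⟨h0, ctail, rfl⟩ : ∃ h0 ctail, c'' = h0 :: ctail := by
          cases c'' with
          | nil => exact absurd rfl hne
          | cons a b => exact ⟨a, b, rfl⟩
        have hh0x : h0 < x := by
          rcases hhead'' with h | h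
          · have h1 : h0 = r0 + 1 ∧ ctail = [] := by
              simp at h; tauto
            have h2 : h0 ≠ x := by
              intro he
              apply hm
              rw [h1.2, he]
            omega
          · simp at h
            omega
        refine ⟨x :: h0 :: ctail, ⟨?_, ?_, ?_⟩, ?_, Or.inr rfl⟩
        · exact List.isChain_cons_cons.mpr ⟨hh0x, hseq''.1⟩
        · have h7 := hseq''.2.1
          simp at h7 ⊢
          omega
        · intro i hi
          cases i with
          | zero =>
            have h5 := hseq''.2.2 0 (by simp)
            simp [List.getD] at h5 ⊢
            omega
          | succ i =>
            have h5 := hseq''.2.2 i (by simp at hi ⊢; omega)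
            simp only [List.getD_cons_succ] at h5 ⊢
            push_cast at h5 ⊢
            linarith [h5]
        · intro j hj
          have h6 := hval'' (j - 1) (by omega)
          rw [B_cons, h6]
          conv_rhs => rw [B_cons]

lemma chain_map_sub {a : List ℤ} (h : a.Chain' (· > ·)) : (a.map (· - 1)).Chain' (· > ·) := by
  show List.IsChain _ _
  rw [List.isChain_map]
  exact h.imp (fun a b hab => by omega)

lemma getD_map_sub (a : List ℤ) (i : ℕ) (hi : i < a.length) :
    (a.map (· - 1)).getD i 0 = a.getD i 0 - 1 := by
  rw [List.getD_eq_getElem _ _ (by simpa using hi), List.getD_eq_getElem _ _ hi, List.getElem_map]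

lemma step_down {k : ℕ} (hk : 2 ≤ k) {a cc : List ℤ}
    (ha : IsKBinomSeq k a) (hc : IsKBinomSeq (k - 1) cc)
    (h : B cc ((k : ℤ) - 1) = B (a.map (· - 1)) ((k : ℤ) - 1)) :
    B cc ((k : ℤ) - 2) = B (a.map (· - 1)) ((k : ℤ) - 2) := by
  have hcast : ((k - 1 : ℕ) : ℤ) = (k : ℤ) - 1 := by omega
  rcases le_or_gt a.length (k - 1) with hlen | hlen
  · have hd : IsKBinomSeq (k - 1) (a.map (· - 1)) := by
      refine ⟨chain_map_sub ha.1, by simpa using hlen, ?_⟩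
      intro i hi
      simp only [List.length_map] at hi
      rw [getD_map_sub a i hi]
      have := ha.2.2 i hi
      omega
    have heq : cc = a.map (· - 1) := kbinom_unique cc _ hc hd (by rw [hcast]; exact h)
    rw [heq]
  · have hlen' : a.length = k := le_antisymm ha.2.1 (by omega)
    have hnn : ∀ z ∈ a.map (· - 1), 0 ≤ z := by
      intro z hz
      simp only [List.mem_map] at hz
      obtain ⟨w, hw, rfl⟩ := hz
      have := seq_one_le ha w hw
      omega
    obtain ⟨c', hseq', hval', -⟩ := norm2 (a.map (· - 1)) (k - 1) (by simp; omega) (by omega)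
        (chain_map_sub ha.1) hnn
    have h1 : B cc ((k : ℤ) - 1) = B c' ((k : ℤ) - 1) := by
      rw [h, ← hval' ((k : ℤ) - 1) (by omega)]
    have heq : cc = c' := kbinom_unique cc c' hc hseq' (by rw [hcast]; exact h1)
    rw [heq, hval' ((k : ℤ) - 2) (by omega)]

section ShadowSplit

variable {α : Type} [DecidableEq α]

lemma shadow_split (S : Finset (Finset α)) (x : α) :
    Finset.shadow S =
      (Finset.shadow (S.filter (fun X => x ∉ X)) ∪
          (S.filter (fun X => x ∈ X)).image (fun X => X.erase x)) ∪
        ((Finset.shadow ((S.filter (fun X => x ∈ X)).image (fun X => X.erase x))).image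
          (insert x)) := by
  ext Y
  simp only [Finset.mem_union, Finset.mem_shadow_iff, Finset.mem_image, Finset.mem_filter]
  constructor
  · rintro ⟨X, hX, y, hy, rfl⟩
    by_cases hxX : x ∈ X
    · by_cases hyx : y = x
      · subst hyx
        exact Or.inl (Or.inr ⟨X, ⟨hX, hxX⟩, rfl⟩)
      · refine Or.inr ⟨(X.erase x).erase y,
          ⟨X.erase x, ⟨X, ⟨hX, hxX⟩, rfl⟩, y, Finset.mem_erase.mpr ⟨hyx, hy⟩, rfl⟩, ?_⟩
        rw [← Finset.erase_insert_of_ne (fun h => hyx h.symm), Finset.insert_erase hxX]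
    · exact Or.inl (Or.inl ⟨X, ⟨hX, hxX⟩, y, hy, rfl⟩)
  · rintro (( ⟨X, ⟨hX, hxX⟩, y, hy, rfl⟩ | ⟨X, ⟨hX, hxX⟩, rfl⟩) | ⟨Z, ⟨W, ⟨X, ⟨hX, hxX⟩, rfl⟩, w, hw, rfl⟩, rfl⟩)
    · exact ⟨X, hX, y, hy, rfl⟩
    · exact ⟨X, hX, x, hxX, rfl⟩
    · refine ⟨X, hX, w, (Finset.mem_erase.mp hw).2, ?_⟩
      rw [← Finset.erase_insert_of_ne (fun h => (Finset.mem_erase.mp hw).1 h.symm),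
        Finset.insert_erase hxX]

lemma x_not_mem_of_shadow {T : Finset (Finset α)} {x : α} (hT : ∀ W ∈ T, x ∉ W) :
    ∀ Z ∈ Finset.shadow T, x ∉ Z := by
  intro Z hZ
  obtain ⟨W, hW, w, hw, rfl⟩ := Finset.mem_shadow_iff.mp hZ
  exact fun h => hT W hW (Finset.mem_of_mem_erase h)

lemma shadow_card (S : Finset (Finset α)) (x : α) :
    (Finset.shadow S).card =
      (Finset.shadow (S.filter (fun X => x ∉ X)) ∪
          (S.filter (fun X => x ∈ X)).image (fun X => X.erase x)).card +
        (Finset.shadow ((S.filter (fun X => x ∈ X)).image (fun X => X.erase x))).card := by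
  have hEx : ∀ W ∈ (S.filter (fun X => x ∈ X)).image (fun X => X.erase x), x ∉ W := by
    intro W hW
    obtain ⟨X, _, rfl⟩ := Finset.mem_image.mp hW
    exact Finset.notMem_erase x X
  rw [shadow_split S x, Finset.card_union_of_disjoint, Finset.card_image_of_injOn]
  · intro Z hZ Z' hZ' hins
    have h1 : x ∉ Z := x_not_mem_of_shadow hEx Z hZ
    have h2 : x ∉ Z' := x_not_mem_of_shadow hEx Z' hZ'
    rw [← Finset.erase_insert h1, hins, Finset.erase_insert h2]
  · rw [Finset.disjoint_left]
    intro Y hY hY'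
    obtain ⟨Z, hZ, rfl⟩ := Finset.mem_image.mp hY'
    have : x ∈ insert x Z := Finset.mem_insert_self x Z
    rcases Finset.mem_union.mp hY with h | h
    · have h0 : ∀ W ∈ S.filter (fun X => x ∉ X), x ∉ W := by
        intro W hW; exact (Finset.mem_filter.mp hW).2
      exact x_not_mem_of_shadow h0 _ h this
    · exact hEx _ h this

end ShadowSplit

/-- Characterization of extremal families (sufficiency): if for some `x` the
degree condition together with alternative (i) or (ii) holds, then `S` is extremal. -/
theorem extremal_characterization_sufficiency
    (n k : ℕ) (hk : 2 ≤ k) (hkn : k ≤ n)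
    (S : Finset (Finset (Fin n))) (hS : S.Nonempty) (hScard : ∀ X ∈ S, X.card = k)
    (hsupp : ∀ y : Fin n, ∃ X ∈ S, y ∈ X)
    (a : List ℤ) (ha : IsKBinom k (S.card : ℤ) a)
    (c : Fin n → List ℤ)
    (hc : ∀ x : Fin n, IsKBinom (k - 1) (((S.filter (fun X => x ∈ X)).card : ℤ)) (c x))
    (b : Fin n → List ℤ)
    (hb : ∀ x : Fin n,
      IsKBinom k ((S.card : ℤ) - ((S.filter (fun X => x ∈ X)).card : ℤ)) (b x))
    (hx : ∃ x : Fin n,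
      B (a.map (· - 1)) (k : ℤ) ≤ (S.card : ℤ) - ((S.filter (fun X => x ∈ X)).card : ℤ) ∧
      ((B (a.map (· - 1)) (k : ℤ) < (S.card : ℤ) - ((S.filter (fun X => x ∈ X)).card : ℤ) ∧
          (S.filter (fun X => x ∈ X)).image (fun X => X.erase x)
            ⊆ Finset.shadow (S.filter (fun X => x ∉ X)) ∧
          IsExtremal k (S.filter (fun X => x ∉ X)) ∧
          IsExtremal (k - 1) ((S.filter (fun X => x ∈ X)).image (fun X => X.erase x)) ∧
          B a ((k : ℤ) - 1) = B (b x) ((k : ℤ) - 1) + B (c x) ((k : ℤ) - 2)) ∨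
        ((S.card : ℤ) - ((S.filter (fun X => x ∈ X)).card : ℤ) = B (a.map (· - 1)) (k : ℤ) ∧
          Finset.shadow (S.filter (fun X => x ∉ X))
            ⊆ (S.filter (fun X => x ∈ X)).image (fun X => X.erase x) ∧
          IsExtremal (k - 1) ((S.filter (fun X => x ∈ X)).image (fun X => X.erase x))))) :
    IsExtremal k S := by
  obtain ⟨x, hdeg, hcase⟩ := hx
  have hk1 : ((k - 1 : ℕ) : ℤ) = (k : ℤ) - 1 := by omega
  have hk2 : ((k - 1 : ℕ) : ℤ) - 1 = (k : ℤ) - 2 := by omega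
  have hsum : (S.filter (fun X => x ∈ X)).card + (S.filter (fun X => x ∉ X)).card = S.card :=
    Finset.card_filter_add_card_filter_not _
  have hEcard : ((S.filter (fun X => x ∈ X)).image (fun X => X.erase x)).card
      = (S.filter (fun X => x ∈ X)).card := by
    apply Finset.card_image_of_injOn
    intro X hX X' hX' hee
    have hx1 : x ∈ X := (Finset.mem_filter.mp hX).2
    have hx2 : x ∈ X' := (Finset.mem_filter.mp hX').2
    have hee' : X.erase x = X'.erase x := hee
    rw [← Finset.insert_erase hx1, hee', Finset.insert_erase hx2]
  have hone : ∀ z ∈ a, 1 ≤ z := seq_one_le ha.1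
  have hcm := shadow_card S x
  have hc' := hc x
  rcases hcase with ⟨hlt, hsub, hex0, hexE, heq⟩ | ⟨heqd, hsub, hexE⟩
  · -- case (i)
    have hb' := hb x
    have hun : Finset.shadow (S.filter (fun X => x ∉ X)) ∪
        (S.filter (fun X => x ∈ X)).image (fun X => X.erase x)
        = Finset.shadow (S.filter (fun X => x ∉ X)) := Finset.union_eq_left.mpr hsub
    obtain ⟨d0, ⟨hd0seq, hd0val⟩, hd0sh⟩ := hex0
    obtain ⟨d2, ⟨hd2seq, hd2val⟩, hd2sh⟩ := hexE
    have hval0 : B d0 (k : ℤ) = B (b x) (k : ℤ) := by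
      rw [← hd0val, ← hb'.2]
      push_cast
      omega
    have hd0b : d0 = b x := kbinom_unique d0 (b x) hd0seq hb'.1 hval0
    have hval2 : B d2 ((k - 1 : ℕ) : ℤ) = B (c x) ((k - 1 : ℕ) : ℤ) := by
      rw [← hd2val, ← hc'.2, hEcard]
    have hd2c : d2 = c x := kbinom_unique d2 (c x) hd2seq hc'.1 hval2
    refine ⟨a, ha, ?_⟩
    rw [heq, hcm, hun]
    push_cast
    rw [hd0sh, hd2sh, hd0b, hd2c, hk1]
    have hkk : (k : ℤ) - 1 - 1 = (k : ℤ) - 2 := by ring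
    rw [hkk]
  · -- case (ii)
    have hun : Finset.shadow (S.filter (fun X => x ∉ X)) ∪
        (S.filter (fun X => x ∈ X)).image (fun X => X.erase x)
        = (S.filter (fun X => x ∈ X)).image (fun X => X.erase x) :=
      Finset.union_eq_right.mpr hsub
    obtain ⟨d2, ⟨hd2seq, hd2val⟩, hd2sh⟩ := hexE
    have hval2 : B d2 ((k - 1 : ℕ) : ℤ) = B (c x) ((k - 1 : ℕ) : ℤ) := by
      rw [← hd2val, ← hc'.2, hEcard]
    have hd2c : d2 = c x := kbinom_unique d2 (c x) hd2seq hc'.1 hval2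
    have hpas := B_pascal a hone (k : ℤ)
    have hpas1 := B_pascal a hone ((k : ℤ) - 1)
    have hS1val : ((S.filter (fun X => x ∈ X)).card : ℤ) = B (a.map (· - 1)) ((k : ℤ) - 1) := by
      have h1 := ha.2
      linarith [hpas]
    have hcc : B (c x) ((k : ℤ) - 1) = B (a.map (· - 1)) ((k : ℤ) - 1) := by
      rw [← hS1val, ← hk1, ← hc'.2]
    have hdown := step_down hk ha.1 hc'.1 hcc
    refine ⟨a, ha, ?_⟩
    rw [hcm, hun]
    push_cast
    rw [hd2sh, hd2c, hk2, hEcard, hdown, hS1val]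
    have hkk : (k : ℤ) - 1 - 1 = (k : ℤ) - 2 := by ring
    rw [hkk] at hpas1
    linarith [hpas1]
end

section
/- Let n and k be integers with n > k > 1, and let S be a family of k-element subsets of [n] with |S| = m > 1 whose support is [n]. Let x ∈ [n] be an element of minimum degree in S, i.e. d_S(x) ≤ d_S(y) for all y ∈ [n]. Let a be the k-binomial decomposition of m and b the k-binomial decomposition of |S| − d_S(x). Then b is not the empty sequence and b ≥_lex a−1. -/
lemma C_eq (x j : ℤ) (hx : 0 ≤ x) (hj : 0 ≤ j) :
    C x j = (x.toNat.choose j.toNat : ℤ) := by simp [C, hx, hj]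

lemma C_nonneg_s7 {x j : ℤ} (hx : 0 ≤ x) (hj : 0 ≤ j) : 0 ≤ C x j := by
  rw [C_eq x j hx hj]; positivity

lemma C_one_le {x j : ℤ} (hj : 0 ≤ j) (hjx : j ≤ x) : 1 ≤ C x j := by
  rw [C_eq x j (hj.trans hjx) hj]
  exact_mod_cast Nat.one_le_iff_ne_zero.mpr (Nat.choose_pos (by omega)).ne'

lemma C_mono_s7 {x y j : ℤ} (hx : 0 ≤ x) (hxy : x ≤ y) (hj : 0 ≤ j) : C x j ≤ C y j := by
  rw [C_eq x j hx hj, C_eq y j (hx.trans hxy) hj]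
  exact_mod_cast Nat.choose_le_choose _ (by omega)

lemma C_pascal {x j : ℤ} (hx : 1 ≤ x) (hj : 1 ≤ j) :
    C x j = C (x - 1) j + C (x - 1) (j - 1) := by
  rw [C_eq x j (by omega) (by omega), C_eq (x-1) j (by omega) (by omega),
    C_eq (x-1) (j-1) (by omega) (by omega)]
  have h1 : x.toNat = (x-1).toNat + 1 := by omega
  have h2 : j.toNat = (j-1).toNat + 1 := by omega
  rw [h1, h2, Nat.choose_succ_succ']
  push_cast; ring

lemma C_absorb {x j : ℤ} (hx : 1 ≤ x) (hj : 1 ≤ j) :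
    j * C x j = x * C (x - 1) (j - 1) := by
  rw [C_eq x j (by omega) (by omega), C_eq (x-1) (j-1) (by omega) (by omega)]
  have h1 : x.toNat = (x-1).toNat + 1 := by omega
  have h2 : j.toNat = (j-1).toNat + 1 := by omega
  have key := Nat.add_one_mul_choose_eq (x-1).toNat (j-1).toNat
  have key' : (((x-1).toNat + 1 : ℕ) : ℤ) * ((x-1).toNat.choose (j-1).toNat : ℕ) =
      (((x-1).toNat + 1).choose ((j-1).toNat + 1) : ℕ) * (((j-1).toNat + 1 : ℕ) : ℤ) := by
    exact_mod_cast key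
  rw [h1, h2]
  have hx2 : (((x-1).toNat : ℤ) + 1) = x := by omega
  have hj2 : (((j-1).toNat : ℤ) + 1) = j := by omega
  push_cast at key' ⊢
  rw [hx2, hj2] at key'
  linarith [key']

lemma C_identity (n : ℤ) {x j : ℤ} (hx : 1 ≤ x) (hj : 1 ≤ j) :
    (n - j) * C x j = n * C (x - 1) j + (n - x) * C (x - 1) (j - 1) := by
  have p := C_pascal hx hj
  have a := C_absorb hx hj
  linear_combination n * p - a

lemma C_strict {x y j : ℤ} (hj : 1 ≤ j) (hjx : j ≤ x) (hxy : x < y) :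
    C x j + 1 ≤ C y j := by
  have h1 : C (x+1) j = C x j + C x (j-1) := by
    have := C_pascal (x := x+1) (j := j) (by omega) hj
    simpa using this
  have h2 : 1 ≤ C x (j-1) := C_one_le (by omega) (by omega)
  have h3 : C (x+1) j ≤ C y j := C_mono_s7 (by omega) (by omega) (by omega)
  omega

lemma C_zero_of_lt {x j : ℤ} (hx : 0 ≤ x) (hxj : x < j) : C x j = 0 := by
  rw [C_eq x j hx (by omega)]
  have : x.toNat < j.toNat := by omega
  simp [Nat.choose_eq_zero_of_lt this]

lemma C_self {j : ℤ} (hj : 0 ≤ j) : C j j = 1 := by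
  rw [C_eq j j hj hj]; simp

/-- Valid κ-sequence (shape of a binomial decomposition). -/
def VS : ℤ → List ℤ → Prop
  | _, [] => True
  | κ, h :: t => 1 ≤ κ ∧ κ ≤ h ∧ (∀ y ∈ t, y ≤ h - 1) ∧ VS (κ - 1) t

/-- Quasi-valid κ-sequence (shape of `a - 1` for valid `a`). -/
def QS : ℤ → List ℤ → Prop
  | _, [] => True
  | κ, h :: t => 1 ≤ κ ∧ κ - 1 ≤ h ∧ (∀ y ∈ t, y ≤ h - 1) ∧ QS (κ - 1) t

/-- Flag: some entry equals `κ - i - 1`. -/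
def Dv : ℤ → List ℤ → ℤ
  | _, [] => 0
  | κ, h :: t => max (if h = κ - 1 then 1 else 0) (Dv (κ - 1) t)

lemma VS_QS : ∀ (κ : ℤ) (c : List ℤ), VS κ c → QS κ c
  | _, [], _ => trivial
  | κ, h :: t, ⟨h1, h2, h3, h4⟩ => ⟨h1, by omega, h3, VS_QS _ t h4⟩

lemma VS_map : ∀ (κ : ℤ) (c : List ℤ), VS κ c → QS κ (c.map (· - 1))
  | _, [], _ => trivial
  | κ, h :: t, ⟨h1, h2, h3, h4⟩ => by
    have he : (h :: t).map (· - 1) = (h - 1) :: t.map (· - 1) := rfl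
    rw [he]
    refine ⟨h1, by omega, ?_, VS_map _ t h4⟩
    intro y hy
    simp only [List.mem_map] at hy
    obtain ⟨z, hz, hzz⟩ := hy
    have := h3 z hz
    omega

lemma B_nonneg_s7 : ∀ (κ : ℤ) (c : List ℤ), QS κ c → 0 ≤ B c κ
  | _, [], _ => le_refl 0
  | κ, h :: t, ⟨h1, h2, h3, h4⟩ => by
    have ih := B_nonneg_s7 (κ - 1) t h4
    have hc : 0 ≤ C h κ := C_nonneg_s7 (by omega) (by omega)
    show 0 ≤ C h κ + B t (κ - 1)
    omega

lemma B_pos (κ : ℤ) (h : ℤ) (t : List ℤ) (hv : VS κ (h :: t)) : 1 ≤ B (h :: t) κ := by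
  obtain ⟨h1, h2, h3, h4⟩ := hv
  have hc : 1 ≤ C h κ := C_one_le (by omega) h2
  have ht : 0 ≤ B t (κ - 1) := B_nonneg_s7 _ t (VS_QS _ t h4)
  show 1 ≤ C h κ + B t (κ - 1)
  omega

lemma B_bound : ∀ (κ : ℤ) (h : ℤ) (t : List ℤ), QS κ (h :: t) → B (h :: t) κ ≤ C (h + 1) κ - 1
  | κ, h, [], ⟨h1, h2, _, _⟩ => by
    show C h κ + B [] (κ - 1) ≤ C (h + 1) κ - 1
    have hp : C (h + 1) κ = C h κ + C h (κ - 1) := by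
      have := C_pascal (x := h + 1) (j := κ) (by omega) h1
      simpa using this
    have : 1 ≤ C h (κ - 1) := C_one_le (by omega) (by omega)
    show C h κ + 0 ≤ C (h + 1) κ - 1
    omega
  | κ, h, h' :: t', ⟨h1, h2, h3, h4⟩ => by
    have ih := B_bound (κ - 1) h' t' h4
    obtain ⟨g1, g2, _, _⟩ := h4
    show C h κ + B (h' :: t') (κ - 1) ≤ C (h + 1) κ - 1
    have hm : C (h' + 1) (κ - 1) ≤ C h (κ - 1) := by
      have := h3 h' (by simp)
      exact C_mono_s7 (by omega) (by omega) (by omega)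
    have hp : C (h + 1) κ = C h κ + C h (κ - 1) := by
      have := C_pascal (x := h + 1) (j := κ) (by omega) h1
      simpa using this
    omega

lemma Dv_nonneg : ∀ (κ : ℤ) (c : List ℤ), 0 ≤ Dv κ c
  | _, [] => le_refl 0
  | κ, h :: t => by
    have := Dv_nonneg (κ - 1) t
    show 0 ≤ max (if h = κ - 1 then 1 else 0) (Dv (κ - 1) t)
    rcases le_max_iff.mpr (Or.inr this) with h'
    exact h'

lemma Dv_le_one : ∀ (κ : ℤ) (c : List ℤ), Dv κ c ≤ 1
  | _, [] => by norm_num [Dv]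
  | κ, h :: t => by
    have := Dv_le_one (κ - 1) t
    show max (if h = κ - 1 then 1 else 0) (Dv (κ - 1) t) ≤ 1
    have : (if h = κ - 1 then (1:ℤ) else 0) ≤ 1 := by split <;> norm_num
    exact max_le this (Dv_le_one (κ - 1) t)

lemma lexB {b c : List ℤ} (hlex : List.Lex (· < ·) b c) :
    ∀ κ, VS κ b → QS κ c → B b κ + 1 ≤ B c κ + Dv κ c := by
  induction hlex with
  | nil =>
    rename_i a l
    intro κ _ hc
    obtain ⟨h1, h2, h3, h4⟩ := hc
    have hBl := B_nonneg_s7 _ l h4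
    have hD := Dv_nonneg (κ - 1) l
    show B [] κ + 1 ≤ (C a κ + B l (κ - 1)) + max (if a = κ - 1 then 1 else 0) (Dv (κ - 1) l)
    show (0:ℤ) + 1 ≤ (C a κ + B l (κ - 1)) + max (if a = κ - 1 then 1 else 0) (Dv (κ - 1) l)
    by_cases ha : a = κ - 1
    · have hC : 0 ≤ C a κ := C_nonneg_s7 (by omega) (by omega)
      have hM : (1:ℤ) ≤ max (if a = κ - 1 then 1 else 0) (Dv (κ - 1) l) := by
        rw [if_pos ha]; exact le_max_left _ _
      omega
    · have hC : 1 ≤ C a κ := C_one_le (by omega) (by omega)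
      have hM : (0:ℤ) ≤ max (if a = κ - 1 then 1 else 0) (Dv (κ - 1) l) :=
        le_trans hD (le_max_right _ _)
      omega
  | @rel a l₁ b' l₂ hab =>
    intro κ hb hc
    obtain ⟨hb1, hb2, hb3, hb4⟩ := hb
    obtain ⟨hc1, hc2, hc3, hc4⟩ := hc
    have hbb : B (a :: l₁) κ ≤ C (a + 1) κ - 1 :=
      B_bound κ a l₁ (VS_QS _ _ ⟨hb1, hb2, hb3, hb4⟩)
    have h1 : C (a + 1) κ ≤ C b' κ := C_mono_s7 (by omega) (by omega) (by omega)
    have h2 : 0 ≤ B l₂ (κ - 1) := B_nonneg_s7 _ _ hc4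
    have h3 : 0 ≤ Dv κ (b' :: l₂) := Dv_nonneg _ _
    have e : B (b' :: l₂) κ = C b' κ + B l₂ (κ - 1) := rfl
    rw [e]
    omega
  | @cons a l₁ l₂ h ih =>
    intro κ hb hc
    obtain ⟨hb1, hb2, hb3, hb4⟩ := hb
    obtain ⟨hc1, hc2, hc3, hc4⟩ := hc
    have hIH := ih (κ - 1) hb4 hc4
    have hD : Dv (κ - 1) l₂ ≤ Dv κ (a :: l₂) := le_max_right _ _
    have e1 : B (a :: l₁) κ = C a κ + B l₁ (κ - 1) := rfl
    have e2 : B (a :: l₂) κ = C a κ + B l₂ (κ - 1) := rfl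
    rw [e1, e2]
    omega

lemma mainIneq : ∀ (c : List ℤ) (κ n : ℤ), 1 ≤ κ → κ + 1 ≤ n → VS κ c → B c κ ≤ C n κ →
    n * (B (c.map (· - 1)) κ + Dv κ (c.map (· - 1)) - 1) + 1 ≤ (n - κ) * B c κ := by
  intro c
  induction c with
  | nil =>
    intro κ n h1 h2 _ _
    show n * (B [] κ + Dv κ [] - 1) + 1 ≤ (n - κ) * B [] κ
    show n * ((0:ℤ) + 0 - 1) + 1 ≤ (n - κ) * 0
    nlinarith
  | cons h t ih =>
    intro κ n h1 h2 hv hB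
    obtain ⟨v1, v2, v3, v4⟩ := hv
    have hBt : 0 ≤ B t (κ - 1) := B_nonneg_s7 _ _ (VS_QS _ _ v4)
    have hBc : B (h :: t) κ = C h κ + B t (κ - 1) := rfl
    have hhn : h ≤ n := by
      by_contra hcon
      push_neg at hcon
      have hs := C_strict (j := κ) h1 (by omega) hcon
      rw [hBc] at hB
      omega
    have hid : (n - κ) * C h κ = n * C (h - 1) κ + (n - h) * C (h - 1) (κ - 1) :=
      C_identity n (by omega) h1
    cases t with
    | nil =>
      have e1 : B ((h :: ([] : List ℤ)).map (· - 1)) κ = C (h - 1) κ + 0 := rfl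
      have e2 : Dv κ ((h :: ([] : List ℤ)).map (· - 1)) =
          max (if h - 1 = κ - 1 then 1 else 0) 0 := rfl
      have e3 : B (h :: ([] : List ℤ)) κ = C h κ + 0 := rfl
      rw [e1, e2, e3]
      by_cases hk : h = κ
      · have hz : C (h - 1) κ = 0 := C_zero_of_lt (by omega) (by omega)
        have ho : C h κ = 1 := by rw [hk]; exact C_self (by omega)
        have hmx : max (1:ℤ) 0 = 1 := by norm_num
        rw [hz, ho, if_pos (show h - 1 = κ - 1 by omega), hmx]
        linarith
      · have hnn : 0 ≤ C (h - 1) (κ - 1) := C_nonneg_s7 (by omega) (by omega)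
        have hf : 0 ≤ (n - h) * C (h - 1) (κ - 1) := mul_nonneg (by omega) hnn
        rw [if_neg (show ¬(h - 1 = κ - 1) by omega)]
        simp only [max_self]
        nlinarith [hid, hf]
    | cons h' t' =>
      obtain ⟨w1, w2, w3, w4⟩ := v4
      have hh'h : h' ≤ h - 1 := v3 h' (by simp)
      have hBt1 : 1 ≤ B (h' :: t') (κ - 1) := B_pos _ _ _ ⟨w1, w2, w3, w4⟩
      have hhn1 : h ≤ n - 1 := by
        by_contra hcon
        push_neg at hcon
        have hh : h = n := by omega
        rw [hBc, hh] at hB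
        omega
      have hBt' : B (h' :: t') (κ - 1) ≤ C (n - 1) (κ - 1) := by
        have hbd := B_bound (κ - 1) h' t' (VS_QS _ _ ⟨w1, w2, w3, w4⟩)
        have hcm : C (h' + 1) (κ - 1) ≤ C (n - 1) (κ - 1) := C_mono_s7 (by omega) (by omega) (by omega)
        omega
      have hIH := ih (κ - 1) (n - 1) (by omega) (by omega) ⟨w1, w2, w3, w4⟩ hBt'
      set Bm := B ((h' :: t').map (· - 1)) (κ - 1) with hBmdef
      set D' := Dv (κ - 1) ((h' :: t').map (· - 1)) with hD'def
      set Bt := B (h' :: t') (κ - 1) with hBtdef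
      have hDnn : 0 ≤ D' := Dv_nonneg _ _
      have hD'le : D' ≤ 1 := Dv_le_one _ _
      have haD : (if h - 1 = κ - 1 then (1:ℤ) else 0) ≤ D' := by
        by_cases hk : h = κ
        · have hh' : h' = κ - 1 := by omega
          have eD : D' = max (if h' - 1 = κ - 1 - 1 then 1 else 0) (Dv (κ - 1 - 1) (t'.map (· - 1))) := rfl
          have : (1:ℤ) ≤ D' := by
            rw [eD, if_pos (show h' - 1 = κ - 1 - 1 by omega)]
            exact le_max_left _ _
          split <;> omega
        · rw [if_neg (by omega)]; exact hDnn
      -- bound on Bm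
      have hmapt : (h' :: t').map (· - 1) = (h' - 1) :: t'.map (· - 1) := rfl
      have hQm : QS (κ - 1) ((h' - 1) :: t'.map (· - 1)) := by
        rw [← hmapt]; exact VS_map _ _ ⟨w1, w2, w3, w4⟩
      have hBm' : Bm ≤ C h' (κ - 1) - 1 := by
        have hbd := B_bound (κ - 1) (h' - 1) (t'.map (· - 1)) hQm
        have he : h' - 1 + 1 = h' := by ring
        rw [he] at hbd
        rw [hBmdef, hmapt]
        exact hbd
      have hCm : C h' (κ - 1) ≤ C (h - 1) (κ - 1) := C_mono_s7 (by omega) (by omega) (by omega)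
      have hCp : 1 ≤ C (h - 1) (κ - 1) := C_one_le (by omega) (by omega)
      have hfact : 0 ≤ (n - h - 1) * C (h - 1) (κ - 1) := mul_nonneg (by omega) (by omega)
      have hexp : (n - h) * C (h - 1) (κ - 1) = (n - h - 1) * C (h - 1) (κ - 1) + C (h - 1) (κ - 1) := by ring
      have hX1 : Bm + D' - 1 ≤ (n - h) * C (h - 1) (κ - 1) := by
        linarith [hBm', hCm, hD'le, hfact, hexp]
      -- rewrite goal
      have e1 : B ((h :: h' :: t').map (· - 1)) κ = C (h - 1) κ + Bm := rfl
      have e2 : Dv κ ((h :: h' :: t').map (· - 1)) =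
          max (if h - 1 = κ - 1 then 1 else 0) D' := rfl
      have e3 : B (h :: h' :: t') κ = C h κ + Bt := rfl
      rw [e1, e2, e3]
      set D0 := max (if h - 1 = κ - 1 then (1:ℤ) else 0) D' with hD0def
      have hD0 : D0 ≤ D' := max_le haD le_rfl
      have hD0nn : 0 ≤ D0 := le_trans hDnn (le_max_right _ _)
      have hIH' : (n - 1) * (Bm + D' - 1) + 1 ≤ (n - κ) * Bt := by
        have hre : (n - 1 - (κ - 1)) * Bt = (n - κ) * Bt := by ring
        rw [hre] at hIH
        exact hIH
      have hn0 : (0:ℤ) ≤ n := by omega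
      have step1 : n * (C (h - 1) κ + Bm + D0 - 1) ≤ n * (C (h - 1) κ + Bm + D' - 1) :=
        mul_le_mul_of_nonneg_left (by omega) hn0
      calc n * (C (h - 1) κ + Bm + D0 - 1) + 1
          ≤ n * (C (h - 1) κ + Bm + D' - 1) + 1 := by linarith [step1]
        _ = n * C (h - 1) κ + (n - 1) * (Bm + D' - 1) + (Bm + D' - 1) + 1 := by ring
        _ ≤ n * C (h - 1) κ + ((n - κ) * Bt - 1) + ((n - h) * C (h - 1) (κ - 1)) + 1 := by
            linarith [hIH', hX1]
        _ = (n * C (h - 1) κ + (n - h) * C (h - 1) (κ - 1)) + (n - κ) * Bt := by ring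
        _ = (n - κ) * C h κ + (n - κ) * Bt := by rw [hid]
        _ = (n - κ) * (C h κ + Bt) := by ring

lemma isk_vs : ∀ (k : ℕ) (a : List ℤ), IsKBinomSeq k a → VS (k : ℤ) a := by
  intro k a
  induction a generalizing k with
  | nil => intro _; trivial
  | cons h t ih =>
    rintro ⟨hch, hlen, hidx⟩
    simp only [List.length_cons] at hlen
    have hk1 : 1 ≤ k := by omega
    have hh : (k:ℤ) ≤ h := by
      have := hidx 0 (by simp)
      simpa using this
    have hpw : ∀ y ∈ t, y ≤ h - 1 := by
      have hp := (List.isChain_iff_pairwise.mp hch)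
      rw [List.pairwise_cons] at hp
      intro y hy; have := hp.1 y hy; omega
    have htail : IsKBinomSeq (k-1) t := by
      refine ⟨hch.tail, by omega, ?_⟩
      intro i hi
      have h2 := hidx (i+1) (by simpa using by omega)
      have hg : (h :: t).getD (i+1) 0 = t.getD i 0 := rfl
      rw [hg] at h2
      have hc : ((k - 1 : ℕ) : ℤ) = (k : ℤ) - 1 := by omega
      rw [hc]
      push_cast at h2 ⊢
      omega
    have hvt := ih (k-1) htail
    have hcast : ((k-1 : ℕ) : ℤ) = (k:ℤ) - 1 := by omega
    rw [hcast] at hvt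
    exact ⟨by exact_mod_cast hk1, hh, hpw, hvt⟩

lemma double_count (n k : ℕ) (S : Finset (Finset (Fin n)))
    (hScard : ∀ X ∈ S, X.card = k) :
    ∑ y : Fin n, (S.filter (fun X => y ∈ X)).card = k * S.card := by
  calc ∑ y : Fin n, (S.filter (fun X => y ∈ X)).card
      = ∑ y : Fin n, ∑ X ∈ S, (if y ∈ X then 1 else 0) := by
        refine Finset.sum_congr rfl fun y _ => ?_
        rw [Finset.card_filter]
    _ = ∑ X ∈ S, ∑ y : Fin n, (if y ∈ X then 1 else 0) := Finset.sum_comm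
    _ = ∑ X ∈ S, X.card := by
        refine Finset.sum_congr rfl fun X _ => ?_
        rw [Finset.sum_ite_mem, Finset.univ_inter, Finset.sum_const, smul_eq_mul, mul_one]
    _ = ∑ _X ∈ S, k := Finset.sum_congr rfl (fun X hX => hScard X hX)
    _ = k * S.card := by rw [Finset.sum_const, smul_eq_mul, mul_comm]

lemma card_bound (n k : ℕ) (S : Finset (Finset (Fin n)))
    (hScard : ∀ X ∈ S, X.card = k) : S.card ≤ Nat.choose n k := by
  have hsub : S ⊆ Finset.powersetCard k Finset.univ := fun X hX =>
    Finset.mem_powersetCard.mpr ⟨Finset.subset_univ X, hScard X hX⟩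
  have := Finset.card_le_card hsub
  rwa [Finset.card_powersetCard, Finset.card_univ, Fintype.card_fin] at this


/-- For an element `x` of minimum degree in `S`, the `k`-binomial decomposition `b`
of `|S| - d_S(x)` is nonempty and satisfies `b ≥_lex a - 1`. -/
theorem min_degree_lex_bound
    (n k : ℕ) (hk : 1 < k) (hkn : k < n)
    (S : Finset (Finset (Fin n))) (hScard : ∀ X ∈ S, X.card = k) (hm : 1 < S.card)
    (hsupp : ∀ y : Fin n, ∃ X ∈ S, y ∈ X)
    (x : Fin n)
    (hmin : ∀ y : Fin n,
      (S.filter (fun X => x ∈ X)).card ≤ (S.filter (fun X => y ∈ X)).card)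
    (a : List ℤ) (ha : IsKBinom k (S.card : ℤ) a)
    (b : List ℤ)
    (hb : IsKBinom k ((S.card : ℤ) - ((S.filter (fun X => x ∈ X)).card : ℤ)) b) :
    b ≠ [] ∧ lexLE (a.map (· - 1)) b := by
  have hdc := double_count n k S hScard
  have hnd : n * (S.filter (fun X => x ∈ X)).card ≤ k * S.card := by
    calc n * (S.filter (fun X => x ∈ X)).card
        = ∑ _y : Fin n, (S.filter (fun X => x ∈ X)).card := by
          rw [Finset.sum_const, Finset.card_univ, Fintype.card_fin, smul_eq_mul]
      _ ≤ ∑ y : Fin n, (S.filter (fun X => y ∈ X)).card :=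
          Finset.sum_le_sum fun y _ => hmin y
      _ = k * S.card := hdc
  have hmC : S.card ≤ Nat.choose n k := card_bound n k S hScard
  have hVa : VS (k:ℤ) a := isk_vs k a ha.1
  have hVb : VS (k:ℤ) b := isk_vs k b hb.1
  have hBa : (S.card : ℤ) = B a (k:ℤ) := ha.2
  have hBb : (S.card : ℤ) - ((S.filter (fun X => x ∈ X)).card : ℤ) = B b (k:ℤ) := hb.2
  have hCn : B a (k:ℤ) ≤ C (n:ℤ) (k:ℤ) := by
    rw [← hBa, C_eq _ _ (by positivity) (by positivity)]
    simp only [Int.toNat_natCast]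
    exact_mod_cast hmC
  have hdm : (S.filter (fun X => x ∈ X)).card < S.card := by nlinarith
  have hNpos : 1 ≤ (S.card : ℤ) - ((S.filter (fun X => x ∈ X)).card : ℤ) := by
    have : ((S.filter (fun X => x ∈ X)).card : ℤ) < (S.card : ℤ) := by exact_mod_cast hdm
    omega
  constructor
  · intro hbnil
    rw [hbnil] at hBb
    have : B ([] : List ℤ) (k:ℤ) = 0 := rfl
    omega
  · have htri := @trichotomous (List ℤ) (List.Lex (· < ·)) (List.Lex.trichotomous _)
      (a.map (· - 1)) b
    rcases htri with hlt | heq | hgt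
    · exact Or.inr hlt
    · exact Or.inl heq
    · exfalso
      have hQ : QS (k:ℤ) (a.map (· - 1)) := VS_map _ _ hVa
      have hlexb := lexB hgt (k:ℤ) hVb hQ
      have hMain := mainIneq a (k:ℤ) (n:ℤ) (by exact_mod_cast hk.le)
        (by exact_mod_cast hkn) hVa hCn
      have hndZ : (n:ℤ) * ((S.filter (fun X => x ∈ X)).card : ℤ) ≤ (k:ℤ) * (S.card : ℤ) := by
        exact_mod_cast hnd
      have h1 : ((n:ℤ) - (k:ℤ)) * B a (k:ℤ) ≤
          (n:ℤ) * ((S.card : ℤ) - ((S.filter (fun X => x ∈ X)).card : ℤ)) := by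
        rw [← hBa]; nlinarith
      have h3 : (n:ℤ) * (B (a.map (· - 1)) (k:ℤ) + Dv (k:ℤ) (a.map (· - 1)) - 1) + 1 ≤
          (n:ℤ) * ((S.card : ℤ) - ((S.filter (fun X => x ∈ X)).card : ℤ)) := by linarith
      have h4 : B (a.map (· - 1)) (k:ℤ) + Dv (k:ℤ) (a.map (· - 1)) ≤
          (S.card : ℤ) - ((S.filter (fun X => x ∈ X)).card : ℤ) := by
        by_contra hcon
        push_neg at hcon
        have hmul : (n:ℤ) * ((S.card : ℤ) - ((S.filter (fun X => x ∈ X)).card : ℤ)) ≤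
            (n:ℤ) * (B (a.map (· - 1)) (k:ℤ) + Dv (k:ℤ) (a.map (· - 1)) - 1) :=
          mul_le_mul_of_nonneg_left (by omega) (by positivity)
        linarith
      rw [← hBb] at hlexb
      linarith
end
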